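/- Parameter theorem: Let A, B be categories with variance, (R₁,L₁) a span on A, and F : A × B → C a functor of variance for the product variance. Assume ∫_{L₁} F^b exists with universal wedge ω^b for every object b of B. Then the assignment b ↦ ∫_{L₁} F^b extends uniquely to a functor of variance ∫_{L₁}F : B → C such that for every object a of R₁ and every morphism g of B, ω^{g_t}_a ∘ (∫_{L₁}F)(g) = F(id_{L₁(a)}, g) ∘ ω^{g_s}_a. -/

import Mathlib

open CategoryTheory

universe v u v₂ u₂ v₃ u₃

/-- A variance `(E,M)` on a category `C`: wide subcategories such that both `(E,M)` and
`(M,E)` are strict factorization systems.  The chosen terminating factorization of `f` is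
`f = tm f ∘ te f` (i.e. `f = f^m ∘ f^e`) through the object `tObj f` (the terminating
object `f_t`), and the chosen starting factorization is `f = se f ∘ sm f`
(i.e. `f = f_e ∘ f_m`) through `sObj f` (the starting object `f_s`). -/
structure Variance (C : Type u) [Category.{v} C] where
  E : MorphismProperty C
  M : MorphismProperty C
  E_id : ∀ X : C, E (𝟙 X)
  M_id : ∀ X : C, M (𝟙 X)
  E_comp : ∀ {X Y Z : C} (f : X ⟶ Y) (g : Y ⟶ Z), E f → E g → E (f ≫ g)
  M_comp : ∀ {X Y Z : C} (f : X ⟶ Y) (g : Y ⟶ Z), M f → M g → M (f ≫ g)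
  tObj : ∀ {X Y : C}, (X ⟶ Y) → C
  te : ∀ {X Y : C} (f : X ⟶ Y), X ⟶ tObj f
  tm : ∀ {X Y : C} (f : X ⟶ Y), tObj f ⟶ Y
  te_mem : ∀ {X Y : C} (f : X ⟶ Y), E (te f)
  tm_mem : ∀ {X Y : C} (f : X ⟶ Y), M (tm f)
  t_fac : ∀ {X Y : C} (f : X ⟶ Y), te f ≫ tm f = f
  t_uniq : ∀ {X Y : C} (f : X ⟶ Y) (Z : C) (e : X ⟶ Z) (m : Z ⟶ Y),
      E e → M m → e ≫ m = f →
      (⟨Z, e, m⟩ : Σ Z : C, (X ⟶ Z) × (Z ⟶ Y)) = ⟨tObj f, te f, tm f⟩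
  sObj : ∀ {X Y : C}, (X ⟶ Y) → C
  sm : ∀ {X Y : C} (f : X ⟶ Y), X ⟶ sObj f
  se : ∀ {X Y : C} (f : X ⟶ Y), sObj f ⟶ Y
  sm_mem : ∀ {X Y : C} (f : X ⟶ Y), M (sm f)
  se_mem : ∀ {X Y : C} (f : X ⟶ Y), E (se f)
  s_fac : ∀ {X Y : C} (f : X ⟶ Y), sm f ≫ se f = f
  s_uniq : ∀ {X Y : C} (f : X ⟶ Y) (Z : C) (m : X ⟶ Z) (e : Z ⟶ Y),
      M m → E e → m ≫ e = f →
      (⟨Z, m, e⟩ : Σ Z : C, (X ⟶ Z) × (Z ⟶ Y)) = ⟨sObj f, sm f, se f⟩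

namespace Variance

variable {C : Type u} [Category.{v} C] (V : Variance C)

lemma tObj_of_E {X Y : C} (f : X ⟶ Y) (h : V.E f) : V.tObj f = Y :=
  (congrArg Sigma.fst (V.t_uniq f Y f (𝟙 Y) h (V.M_id Y) (Category.comp_id f))).symm

lemma tObj_of_M {X Y : C} (f : X ⟶ Y) (h : V.M f) : V.tObj f = X :=
  (congrArg Sigma.fst (V.t_uniq f X (𝟙 X) f (V.E_id X) h (Category.id_comp f))).symm

lemma sObj_of_M {X Y : C} (f : X ⟶ Y) (h : V.M f) : V.sObj f = Y :=
  (congrArg Sigma.fst (V.s_uniq f Y f (𝟙 Y) h (V.E_id Y) (Category.comp_id f))).symm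

lemma sObj_of_E {X Y : C} (f : X ⟶ Y) (h : V.E f) : V.sObj f = X :=
  (congrArg Sigma.fst (V.s_uniq f X (𝟙 X) f (V.M_id X) h (Category.id_comp f))).symm

lemma tObj_id (X : C) : V.tObj (𝟙 X) = X := V.tObj_of_E _ (V.E_id X)

lemma sObj_id (X : C) : V.sObj (𝟙 X) = X := V.sObj_of_E _ (V.E_id X)

lemma s_comp_aux {x y z : C} (f : x ⟶ y) (g : y ⟶ z) :
    (V.sm f ≫ V.sm (V.se f ≫ V.sm g)) ≫ V.se (V.se f ≫ V.sm g) ≫ V.se g = f ≫ g := by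
  have h : V.sm (V.se f ≫ V.sm g) ≫ V.se (V.se f ≫ V.sm g) = V.se f ≫ V.sm g :=
    V.s_fac _
  rw [Category.assoc, ← Category.assoc (V.sm (V.se f ≫ V.sm g)), h]
  simp only [Category.assoc]
  rw [V.s_fac g, ← Category.assoc, V.s_fac f]

lemma t_comp_aux {x y z : C} (f : x ⟶ y) (g : y ⟶ z) :
    (V.te f ≫ V.te (V.tm f ≫ V.te g)) ≫ V.tm (V.tm f ≫ V.te g) ≫ V.tm g = f ≫ g := by
  have h : V.te (V.tm f ≫ V.te g) ≫ V.tm (V.tm f ≫ V.te g) = V.tm f ≫ V.te g :=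
    V.t_fac _
  rw [Category.assoc, ← Category.assoc (V.te (V.tm f ≫ V.te g)), h]
  simp only [Category.assoc]
  rw [V.t_fac g, ← Category.assoc, V.t_fac f]

/-- `(gf)_s = (g_m f_e)_s`. -/
lemma sObj_comp {x y z : C} (f : x ⟶ y) (g : y ⟶ z) :
    V.sObj (f ≫ g) = V.sObj (V.se f ≫ V.sm g) :=
  (congrArg Sigma.fst (V.s_uniq (f ≫ g) (V.sObj (V.se f ≫ V.sm g))
    (V.sm f ≫ V.sm (V.se f ≫ V.sm g)) (V.se (V.se f ≫ V.sm g) ≫ V.se g)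
    (V.M_comp _ _ (V.sm_mem f) (V.sm_mem _))
    (V.E_comp _ _ (V.se_mem _) (V.se_mem g)) (V.s_comp_aux f g))).symm

/-- `(gf)_t = (g^e f^m)_t`. -/
lemma tObj_comp {x y z : C} (f : x ⟶ y) (g : y ⟶ z) :
    V.tObj (f ≫ g) = V.tObj (V.tm f ≫ V.te g) :=
  (congrArg Sigma.fst (V.t_uniq (f ≫ g) (V.tObj (V.tm f ≫ V.te g))
    (V.te f ≫ V.te (V.tm f ≫ V.te g)) (V.tm (V.tm f ≫ V.te g) ≫ V.tm g)
    (V.E_comp _ _ (V.te_mem f) (V.te_mem _))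
    (V.M_comp _ _ (V.tm_mem _) (V.tm_mem g)) (V.t_comp_aux f g))).symm

end Variance

/-- A functor of variance `(E,M)` (given by the variance structure `V`): it sends a morphism
`f` to a morphism `F(f) : F(f_s) ⟶ F(f_t)`, preserves identities, and satisfies the two
mixed functoriality equations
`F(gf) = F((g^e f^m)^e) ∘ F(f) ∘ F((g_m f_e)_m)` and
`F(gf) = F((g^e f^m)^m) ∘ F(g) ∘ F((g_m f_e)_e)`. -/
structure VFunctor {C : Type u} [Category.{v} C] (V : Variance C)
    (D : Type u₂) [Category.{v₂} D] where
  obj : C → D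
  map : ∀ {X Y : C} (f : X ⟶ Y), obj (V.sObj f) ⟶ obj (V.tObj f)
  map_id : ∀ X : C,
    map (𝟙 X) = eqToHom (congrArg obj (V.sObj_id X)) ≫
      eqToHom (congrArg obj (V.tObj_id X)).symm
  map_comp₁ : ∀ {x y z : C} (f : x ⟶ y) (g : y ⟶ z),
    map (f ≫ g) =
      eqToHom (congrArg obj ((V.sObj_comp f g).trans
        (V.sObj_of_M _ (V.sm_mem (V.se f ≫ V.sm g))).symm)) ≫
      map (V.sm (V.se f ≫ V.sm g)) ≫
      eqToHom (congrArg obj (V.tObj_of_M _ (V.sm_mem (V.se f ≫ V.sm g)))) ≫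
      map f ≫
      eqToHom (congrArg obj (V.sObj_of_E _ (V.te_mem (V.tm f ≫ V.te g))).symm) ≫
      map (V.te (V.tm f ≫ V.te g)) ≫
      eqToHom (congrArg obj ((V.tObj_of_E _ (V.te_mem (V.tm f ≫ V.te g))).trans
        (V.tObj_comp f g).symm))
  map_comp₂ : ∀ {x y z : C} (f : x ⟶ y) (g : y ⟶ z),
    map (f ≫ g) =
      eqToHom (congrArg obj ((V.sObj_comp f g).trans
        (V.sObj_of_E _ (V.se_mem (V.se f ≫ V.sm g))).symm)) ≫
      map (V.se (V.se f ≫ V.sm g)) ≫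
      eqToHom (congrArg obj (V.tObj_of_E _ (V.se_mem (V.se f ≫ V.sm g)))) ≫
      map g ≫
      eqToHom (congrArg obj (V.sObj_of_M _ (V.tm_mem (V.tm f ≫ V.te g))).symm) ≫
      map (V.tm (V.tm f ≫ V.te g)) ≫
      eqToHom (congrArg obj ((V.tObj_of_M _ (V.tm_mem (V.tm f ≫ V.te g))).trans
        (V.tObj_comp f g).symm))

/-- An `L`-wedge on a functor of variance `F`: an object `pt` together with morphisms
`η x : pt ⟶ F(L x)` such that `F(L(f)^e) ∘ η x = F(L(f)^m) ∘ η y` for every `f : x ⟶ y`. -/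
structure Wedge {A : Type u} [Category.{v} A] {CC : Type u₂} [Category.{v₂} CC]
    (V : Variance A) (F : VFunctor V CC) {R : Type*} [Category R] (L : R ⥤ A) where
  pt : CC
  η : ∀ x : R, pt ⟶ F.obj (L.obj x)
  nat : ∀ {x y : R} (f : x ⟶ y),
    η x ≫ eqToHom (congrArg F.obj (V.sObj_of_E _ (V.te_mem (L.map f))).symm) ≫
        F.map (V.te (L.map f)) ≫
        eqToHom (congrArg F.obj (V.tObj_of_E _ (V.te_mem (L.map f)))) =
      η y ≫ eqToHom (congrArg F.obj (V.sObj_of_M _ (V.tm_mem (L.map f))).symm) ≫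
        F.map (V.tm (L.map f)) ≫
        eqToHom (congrArg F.obj (V.tObj_of_M _ (V.tm_mem (L.map f))))

instance Wedge.category {A : Type u} [Category.{v} A] {CC : Type u₂} [Category.{v₂} CC]
    {V : Variance A} {F : VFunctor V CC} {R : Type*} [Category R] {L : R ⥤ A} :
    Category (Wedge V F L) where
  Hom W₁ W₂ := { f : W₁.pt ⟶ W₂.pt // ∀ x : R, f ≫ W₂.η x = W₁.η x }
  id W := ⟨𝟙 W.pt, fun x => Category.id_comp _⟩
  comp f g := ⟨f.1 ≫ g.1, fun x => by rw [Category.assoc, g.2, f.2]⟩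
  id_comp f := Subtype.ext (Category.id_comp _)
  comp_id f := Subtype.ext (Category.comp_id _)
  assoc f g h := Subtype.ext (Category.assoc _ _ _)

open CategoryTheory.Limits

namespace ParamAux

section General

variable {C : Type u} [Category.{v} C]

lemma sigma_split {X Y Z Z' : C} {u : X ⟶ Z} {v : Z ⟶ Y} {u' : X ⟶ Z'} {v' : Z' ⟶ Y}
    (h : (⟨Z, u, v⟩ : Σ W, (X ⟶ W) × (W ⟶ Y)) = ⟨Z', u', v'⟩) :
    Z = Z' ∧ HEq u u' ∧ HEq v v' := by
  injection h with h1 h2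
  subst h1
  exact ⟨rfl, heq_of_eq (congrArg Prod.fst (eq_of_heq h2)),
    heq_of_eq (congrArg Prod.snd (eq_of_heq h2))⟩

lemma comp_heq {X X' Y Y' Z Z' : C} (hX : X = X') (hY : Y = Y') (hZ : Z = Z')
    {u : X ⟶ Y} {v : Y ⟶ Z} {u' : X' ⟶ Y'} {v' : Y' ⟶ Z'}
    (hu : HEq u u') (hv : HEq v v') : HEq (u ≫ v) (u' ≫ v') := by
  subst hX; subst hY; subst hZ
  rw [eq_of_heq hu, eq_of_heq hv]

variable (V : Variance C)

lemma s_fac_E {X Y : C} (f : X ⟶ Y) (h : V.E f) :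
    (⟨V.sObj f, V.sm f, V.se f⟩ : Σ Z, (X ⟶ Z) × (Z ⟶ Y)) = ⟨X, 𝟙 X, f⟩ :=
  (V.s_uniq f X (𝟙 X) f (V.M_id X) h (Category.id_comp f)).symm

lemma s_fac_M {X Y : C} (f : X ⟶ Y) (h : V.M f) :
    (⟨V.sObj f, V.sm f, V.se f⟩ : Σ Z, (X ⟶ Z) × (Z ⟶ Y)) = ⟨Y, f, 𝟙 Y⟩ :=
  (V.s_uniq f Y f (𝟙 Y) h (V.E_id Y) (Category.comp_id f)).symm

lemma t_fac_E {X Y : C} (f : X ⟶ Y) (h : V.E f) :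
    (⟨V.tObj f, V.te f, V.tm f⟩ : Σ Z, (X ⟶ Z) × (Z ⟶ Y)) = ⟨Y, f, 𝟙 Y⟩ :=
  (V.t_uniq f Y f (𝟙 Y) h (V.M_id Y) (Category.comp_id f)).symm

lemma t_fac_M {X Y : C} (f : X ⟶ Y) (h : V.M f) :
    (⟨V.tObj f, V.te f, V.tm f⟩ : Σ Z, (X ⟶ Z) × (Z ⟶ Y)) = ⟨X, 𝟙 X, f⟩ :=
  (V.t_uniq f X (𝟙 X) f (V.E_id X) h (Category.id_comp f)).symm

lemma heq_sm_of_E {X Y : C} (f : X ⟶ Y) (h : V.E f) : HEq (V.sm f) (𝟙 X) :=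
  (sigma_split (s_fac_E V f h)).2.1
lemma heq_se_of_E {X Y : C} (f : X ⟶ Y) (h : V.E f) : HEq (V.se f) f :=
  (sigma_split (s_fac_E V f h)).2.2
lemma heq_sm_of_M {X Y : C} (f : X ⟶ Y) (h : V.M f) : HEq (V.sm f) f :=
  (sigma_split (s_fac_M V f h)).2.1
lemma heq_se_of_M {X Y : C} (f : X ⟶ Y) (h : V.M f) : HEq (V.se f) (𝟙 Y) :=
  (sigma_split (s_fac_M V f h)).2.2
lemma heq_te_of_E {X Y : C} (f : X ⟶ Y) (h : V.E f) : HEq (V.te f) f :=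
  (sigma_split (t_fac_E V f h)).2.1
lemma heq_tm_of_E {X Y : C} (f : X ⟶ Y) (h : V.E f) : HEq (V.tm f) (𝟙 Y) :=
  (sigma_split (t_fac_E V f h)).2.2
lemma heq_te_of_M {X Y : C} (f : X ⟶ Y) (h : V.M f) : HEq (V.te f) (𝟙 X) :=
  (sigma_split (t_fac_M V f h)).2.1
lemma heq_tm_of_M {X Y : C} (f : X ⟶ Y) (h : V.M f) : HEq (V.tm f) f :=
  (sigma_split (t_fac_M V f h)).2.2

section Congr
variable {X X' Y Y' : C} (hX : X = X') (hY : Y = Y') {f : X ⟶ Y} {f' : X' ⟶ Y'}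
  (hf : HEq f f')

include hX hY hf

lemma sObj_congr : V.sObj f = V.sObj f' := by
  subst hX; subst hY; rw [eq_of_heq hf]
lemma tObj_congr : V.tObj f = V.tObj f' := by
  subst hX; subst hY; rw [eq_of_heq hf]
lemma sm_congr : HEq (V.sm f) (V.sm f') := by
  subst hX; subst hY; rw [eq_of_heq hf]
lemma se_congr : HEq (V.se f) (V.se f') := by
  subst hX; subst hY; rw [eq_of_heq hf]
lemma te_congr : HEq (V.te f) (V.te f') := by
  subst hX; subst hY; rw [eq_of_heq hf]
lemma tm_congr : HEq (V.tm f) (V.tm f') := by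
  subst hX; subst hY; rw [eq_of_heq hf]

lemma E_congr (h : V.E f) : V.E f' := by
  subst hX; subst hY; rw [← eq_of_heq hf]; exact h
lemma M_congr (h : V.M f) : V.M f' := by
  subst hX; subst hY; rw [← eq_of_heq hf]; exact h

end Congr

variable {D : Type u₂} [Category.{v₂} D]

lemma map_heq (F : VFunctor V D) {p q p' q' : C} (hp : p = p') (hq : q = q')
    {φ : p ⟶ q} {φ' : p' ⟶ q'} (hφ : HEq φ φ') : HEq (F.map φ) (F.map φ') := by
  subst hp; subst hq; rw [eq_of_heq hφ]

/-- rewrite `F.map φ` as a conjugate of `F.map φ'` along a `HEq`. -/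
lemma map_congr (F : VFunctor V D) {p q p' q' : C} (hp : p = p') (hq : q = q')
    {φ : p ⟶ q} {φ' : p' ⟶ q'} (hφ : HEq φ φ') :
    F.map φ = eqToHom (congrArg F.obj (sObj_congr V hp hq hφ)) ≫ F.map φ' ≫
      eqToHom (congrArg F.obj (tObj_congr V hp hq hφ)).symm := by
  subst hp; subst hq; cases eq_of_heq hφ; simp

end General

end ParamAux

namespace ParamAux

section Prod

variable {A : Type u} [Category.{v} A] {B : Type u} [Category.{v} B]
  {CC : Type u₂} [Category.{v₂} CC]
  (VA : Variance A) (VB : Variance B) (Vp : Variance (A × B))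
  (hE : ∀ {p q : A × B} (φ : p ⟶ q), Vp.E φ ↔ VA.E φ.1 ∧ VB.E φ.2)
  (hM : ∀ {p q : A × B} (φ : p ⟶ q), Vp.M φ ↔ VA.M φ.1 ∧ VB.M φ.2)
  (hsp : ∀ {p q : A × B} (φ : p ⟶ q), Vp.sObj φ = (VA.sObj φ.1, VB.sObj φ.2))
  (htp : ∀ {p q : A × B} (φ : p ⟶ q), Vp.tObj φ = (VA.tObj φ.1, VB.tObj φ.2))

lemma prodHom_heq {a₁ a₁' a₂ a₂' : A} {b₁ b₁' b₂ b₂' : B}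
    (ha₁ : a₁ = a₁') (ha₂ : a₂ = a₂') (hb₁ : b₁ = b₁') (hb₂ : b₂ = b₂')
    {f : a₁ ⟶ a₂} {f' : a₁' ⟶ a₂'} {g : b₁ ⟶ b₂} {g' : b₁' ⟶ b₂'}
    (hf : HEq f f') (hg : HEq g g') :
    HEq ((f, g) : ((a₁, b₁) : A × B) ⟶ (a₂, b₂))
      ((f', g') : ((a₁', b₁') : A × B) ⟶ (a₂', b₂')) := by
  subst ha₁; subst ha₂; subst hb₁; subst hb₂
  rw [eq_of_heq hf, eq_of_heq hg]

include hE hM in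
lemma prod_s {p q : A × B} (φ : p ⟶ q) :
    (⟨Vp.sObj φ, Vp.sm φ, Vp.se φ⟩ : Σ Z, (p ⟶ Z) × (Z ⟶ q)) =
      ⟨(VA.sObj φ.1, VB.sObj φ.2),
        ((VA.sm φ.1, VB.sm φ.2) : p ⟶ (VA.sObj φ.1, VB.sObj φ.2)),
        ((VA.se φ.1, VB.se φ.2) : ((VA.sObj φ.1, VB.sObj φ.2) : A × B) ⟶ q)⟩ :=
  (Vp.s_uniq φ _ _ _
    ((hM _).mpr ⟨VA.sm_mem _, VB.sm_mem _⟩)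
    ((hE _).mpr ⟨VA.se_mem _, VB.se_mem _⟩)
    (by apply CategoryTheory.Prod.hom_ext <;> simp [VA.s_fac, VB.s_fac])).symm

include hE hM in
lemma prod_t {p q : A × B} (φ : p ⟶ q) :
    (⟨Vp.tObj φ, Vp.te φ, Vp.tm φ⟩ : Σ Z, (p ⟶ Z) × (Z ⟶ q)) =
      ⟨(VA.tObj φ.1, VB.tObj φ.2),
        ((VA.te φ.1, VB.te φ.2) : p ⟶ (VA.tObj φ.1, VB.tObj φ.2)),
        ((VA.tm φ.1, VB.tm φ.2) : ((VA.tObj φ.1, VB.tObj φ.2) : A × B) ⟶ q)⟩ :=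
  (Vp.t_uniq φ _ _ _
    ((hE _).mpr ⟨VA.te_mem _, VB.te_mem _⟩)
    ((hM _).mpr ⟨VA.tm_mem _, VB.tm_mem _⟩)
    (by apply CategoryTheory.Prod.hom_ext <;> simp [VA.t_fac, VB.t_fac])).symm

include hE hM in
/-- componentwise description of the middle morphism `se φ ≫ sm ψ`. -/
lemma mid_s {p q r : A × B} (φ : p ⟶ q) (ψ : q ⟶ r) :
    HEq (Vp.se φ ≫ Vp.sm ψ)
      ((VA.se φ.1 ≫ VA.sm ψ.1, VB.se φ.2 ≫ VB.sm ψ.2) :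
        ((VA.sObj φ.1, VB.sObj φ.2) : A × B) ⟶ (VA.sObj ψ.1, VB.sObj ψ.2)) := by
  obtain ⟨h1, -, h3⟩ := sigma_split (prod_s VA VB Vp hE hM φ)
  obtain ⟨h1', h2', -⟩ := sigma_split (prod_s VA VB Vp hE hM ψ)
  exact comp_heq h1 rfl h1' h3 h2'

include hE hM in
/-- componentwise description of the middle morphism `tm φ ≫ te ψ`. -/
lemma mid_t {p q r : A × B} (φ : p ⟶ q) (ψ : q ⟶ r) :
    HEq (Vp.tm φ ≫ Vp.te ψ)
      ((VA.tm φ.1 ≫ VA.te ψ.1, VB.tm φ.2 ≫ VB.te ψ.2) :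
        ((VA.tObj φ.1, VB.tObj φ.2) : A × B) ⟶ (VA.tObj ψ.1, VB.tObj ψ.2)) := by
  obtain ⟨h1, -, h3⟩ := sigma_split (prod_t VA VB Vp hE hM φ)
  obtain ⟨h1', h2', -⟩ := sigma_split (prod_t VA VB Vp hE hM ψ)
  exact comp_heq h1 rfl h1' h3 h2'

end Prod

end ParamAux

namespace ParamAux

section Core

variable {A : Type u} [Category.{v} A] {B : Type u} [Category.{v} B]
  {CC : Type u₂} [Category.{v₂} CC]
  (VA : Variance A) (VB : Variance B) (Vp : Variance (A × B))
  (hE : ∀ {p q : A × B} (φ : p ⟶ q), Vp.E φ ↔ VA.E φ.1 ∧ VB.E φ.2)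
  (hM : ∀ {p q : A × B} (φ : p ⟶ q), Vp.M φ ↔ VA.M φ.1 ∧ VB.M φ.2)
  (hsp : ∀ {p q : A × B} (φ : p ⟶ q), Vp.sObj φ = (VA.sObj φ.1, VB.sObj φ.2))
  (htp : ∀ {p q : A × B} (φ : p ⟶ q), Vp.tObj φ = (VA.tObj φ.1, VB.tObj φ.2))
  (F : VFunctor Vp CC)

/-- The second-variable partial action `F(a, g)` with honest endpoints. -/
def Phi (a : A) {b b' : B} (g : b ⟶ b') :
    F.obj (a, VB.sObj g) ⟶ F.obj (a, VB.tObj g) :=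
  eqToHom (congrArg F.obj (show ((a, VB.sObj g) : A × B) =
      Vp.sObj ((𝟙 a, g) : ((a, b) : A × B) ⟶ (a, b')) by rw [hsp, VA.sObj_id])) ≫
    F.map ((𝟙 a, g) : ((a, b) : A × B) ⟶ (a, b')) ≫
    eqToHom (congrArg F.obj (show Vp.tObj ((𝟙 a, g) : ((a, b) : A × B) ⟶ (a, b')) =
      ((a, VB.tObj g) : A × B) by rw [htp, VA.tObj_id]))

/-- The first-variable partial action `F(e, b)` for `e ∈ E`, with honest endpoints. -/
def PsiE {a a' : A} (e : a ⟶ a') (he : VA.E e) (b : B) :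
    F.obj (a, b) ⟶ F.obj (a', b) :=
  eqToHom (congrArg F.obj (show ((a, b) : A × B) =
      Vp.sObj ((e, 𝟙 b) : ((a, b) : A × B) ⟶ (a', b)) by
        rw [hsp, VA.sObj_of_E e he, VB.sObj_id])) ≫
    F.map ((e, 𝟙 b) : ((a, b) : A × B) ⟶ (a', b)) ≫
    eqToHom (congrArg F.obj (show Vp.tObj ((e, 𝟙 b) : ((a, b) : A × B) ⟶ (a', b)) =
      ((a', b) : A × B) by rw [htp, VA.tObj_of_E e he, VB.tObj_id]))

/-- The first-variable partial action `F(m, b)` for `m ∈ M`, with honest endpoints. -/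
def PsiM {a a' : A} (m : a ⟶ a') (hm : VA.M m) (b : B) :
    F.obj (a', b) ⟶ F.obj (a, b) :=
  eqToHom (congrArg F.obj (show ((a', b) : A × B) =
      Vp.sObj ((m, 𝟙 b) : ((a, b) : A × B) ⟶ (a', b)) by
        rw [hsp, VA.sObj_of_M m hm, VB.sObj_id])) ≫
    F.map ((m, 𝟙 b) : ((a, b) : A × B) ⟶ (a', b)) ≫
    eqToHom (congrArg F.obj (show Vp.tObj ((m, 𝟙 b) : ((a, b) : A × B) ⟶ (a', b)) =
      ((a, b) : A × B) by rw [htp, VA.tObj_of_M m hm, VB.tObj_id]))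

end Core

end ParamAux

namespace ParamAux

section Interchange

variable {A : Type u} [Category.{v} A] {B : Type u} [Category.{v} B]
  {CC : Type u₂} [Category.{v₂} CC]
  (VA : Variance A) (VB : Variance B) (Vp : Variance (A × B))
  (hE : ∀ {p q : A × B} (φ : p ⟶ q), Vp.E φ ↔ VA.E φ.1 ∧ VB.E φ.2)
  (hM : ∀ {p q : A × B} (φ : p ⟶ q), Vp.M φ ↔ VA.M φ.1 ∧ VB.M φ.2)
  (hsp : ∀ {p q : A × B} (φ : p ⟶ q), Vp.sObj φ = (VA.sObj φ.1, VB.sObj φ.2))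
  (htp : ∀ {p q : A × B} (φ : p ⟶ q), Vp.tObj φ = (VA.tObj φ.1, VB.tObj φ.2))
  (F : VFunctor Vp CC)

include hE hM in
lemma interchange_E {a₁ a₂ : A} (e : a₁ ⟶ a₂) (he : VA.E e) {b b' : B} (g : b ⟶ b') :
    PsiE VA VB Vp hsp htp F e he (VB.sObj g) ≫ Phi VA VB Vp hsp htp F a₂ g =
      Phi VA VB Vp hsp htp F a₁ g ≫ PsiE VA VB Vp hsp htp F e he (VB.tObj g) := by
  have r₁ : F.obj ((a₁, VB.sObj g) : A × B) =
      F.obj (Vp.sObj ((e, g) : ((a₁, b) : A × B) ⟶ (a₂, b'))) := by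
    rw [hsp, VA.sObj_of_E e he]
  have r₂ : F.obj (Vp.tObj ((e, g) : ((a₁, b) : A × B) ⟶ (a₂, b'))) =
      F.obj ((a₂, VB.tObj g) : A × B) := by
    rw [htp, VA.tObj_of_E e he]
  -- ========== side A : map_comp₁ on (𝟙a₁,g) ≫ (e,𝟙b') ==========
  have EA : Phi VA VB Vp hsp htp F a₁ g ≫ PsiE VA VB Vp hsp htp F e he (VB.tObj g) =
      eqToHom r₁ ≫ F.map ((e, g) : ((a₁, b) : A × B) ⟶ (a₂, b')) ≫ eqToHom r₂ := by
    set φ : ((a₁, b) : A × B) ⟶ (a₁, b') := (𝟙 a₁, g) with hφ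
    set ψ : ((a₁, b') : A × B) ⟶ (a₂, b') := (e, 𝟙 b') with hψ
    have hc : φ ≫ ψ = ((e, g) : ((a₁, b) : A × B) ⟶ (a₂, b')) := by
      apply CategoryTheory.Prod.hom_ext <;> simp [hφ, hψ]
    have hA := F.map_comp₁ φ ψ
    -- endpoint equalities
    have eφ : Vp.sObj φ = ((a₁, VB.sObj g) : A × B) := by rw [hsp, hφ, VA.sObj_id]
    have eψ : Vp.sObj ψ = ((a₁, b') : A × B) := by
      rw [hsp, hψ, VA.sObj_of_E e he, VB.sObj_id]
    have tφ : Vp.tObj φ = ((a₁, VB.tObj g) : A × B) := by rw [htp, hφ, VA.tObj_id]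
    have tψ : Vp.tObj ψ = ((a₂, b') : A × B) := by
      rw [htp, hψ, VA.tObj_of_E e he, VB.tObj_id]
    -- middle morphism of the s-factorization
    have hmidA : HEq (Vp.se φ ≫ Vp.sm ψ)
        ((𝟙 a₁, VB.se g) : ((a₁, VB.sObj g) : A × B) ⟶ (a₁, b')) := by
      refine (mid_s VA VB Vp hE hM φ ψ).trans
        (prodHom_heq (VA.sObj_id a₁) (VA.sObj_of_E e he) rfl (VB.sObj_id b') ?_ ?_)
      · exact (comp_heq (VA.sObj_id a₁) rfl (VA.sObj_of_E e he)
          (heq_se_of_E VA _ (VA.E_id a₁)) (heq_sm_of_E VA e he)).trans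
          (heq_of_eq (Category.id_comp (𝟙 a₁)))
      · exact (comp_heq rfl rfl (VB.sObj_id b') HEq.rfl
          (heq_sm_of_E VB _ (VB.E_id b'))).trans (heq_of_eq (Category.comp_id _))
    have emid : Vp.sObj (Vp.se φ ≫ Vp.sm ψ) = ((a₁, VB.sObj g) : A × B) :=
      (sObj_congr Vp eφ eψ hmidA).trans
        (by rw [hsp, VA.sObj_id, VB.sObj_of_E _ (VB.se_mem g)])
    have hp1 : HEq (Vp.sm (Vp.se φ ≫ Vp.sm ψ)) (𝟙 ((a₁, VB.sObj g) : A × B)) := by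
      refine ((sm_congr Vp eφ eψ hmidA).trans
        ((sigma_split (prod_s VA VB Vp hE hM
          ((𝟙 a₁, VB.se g) : ((a₁, VB.sObj g) : A × B) ⟶ (a₁, b')))).2.1)).trans ?_
      refine (prodHom_heq rfl (VA.sObj_id a₁) rfl (VB.sObj_of_E _ (VB.se_mem g))
        (heq_sm_of_E VA _ (VA.E_id a₁)) (heq_sm_of_E VB _ (VB.se_mem g))).trans ?_
      exact heq_of_eq (CategoryTheory.prod_id (C := A) (D := B) a₁ (VB.sObj g)).symm
    rw [map_congr Vp F eφ emid hp1, F.map_id] at hA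
    -- middle morphism of the t-factorization
    have hmidtA : HEq (Vp.tm φ ≫ Vp.te ψ)
        ((e, VB.tm g) : ((a₁, VB.tObj g) : A × B) ⟶ (a₂, b')) := by
      refine (mid_t VA VB Vp hE hM φ ψ).trans
        (prodHom_heq (VA.tObj_id a₁) (VA.tObj_of_E e he) rfl (VB.tObj_id b') ?_ ?_)
      · exact (comp_heq (VA.tObj_id a₁) rfl (VA.tObj_of_E e he)
          (heq_tm_of_E VA _ (VA.E_id a₁)) (heq_te_of_E VA e he)).trans
          (heq_of_eq (Category.id_comp e))
      · exact (comp_heq rfl rfl (VB.tObj_id b') HEq.rfl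
          (heq_te_of_E VB _ (VB.E_id b'))).trans (heq_of_eq (Category.comp_id _))
    have etmid : Vp.tObj (Vp.tm φ ≫ Vp.te ψ) = ((a₂, VB.tObj g) : A × B) :=
      (tObj_congr Vp tφ tψ hmidtA).trans
        (by rw [htp, VA.tObj_of_E e he, VB.tObj_of_M _ (VB.tm_mem g)])
    have hp2 : HEq (Vp.te (Vp.tm φ ≫ Vp.te ψ))
        ((e, 𝟙 (VB.tObj g)) : ((a₁, VB.tObj g) : A × B) ⟶ (a₂, VB.tObj g)) := by
      refine ((te_congr Vp tφ tψ hmidtA).trans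
        ((sigma_split (prod_t VA VB Vp hE hM
          ((e, VB.tm g) : ((a₁, VB.tObj g) : A × B) ⟶ (a₂, b')))).2.1)).trans ?_
      exact prodHom_heq rfl (VA.tObj_of_E e he) rfl (VB.tObj_of_M _ (VB.tm_mem g))
        (heq_te_of_E VA e he) (heq_te_of_M VB _ (VB.tm_mem g))
    rw [map_congr Vp F tφ etmid hp2] at hA
    -- relate `F.map (e,g)` to `F.map (φ ≫ ψ)`
    have hA' := map_congr Vp F rfl rfl (heq_of_eq hc.symm)
    rw [hA] at hA'
    rw [hA']
    simp [Phi, PsiE, Category.assoc, eqToHom_trans, eqToHom_refl]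
    rfl
  -- ========== side B : map_comp₂ on (e,𝟙b) ≫ (𝟙a₂,g) ==========
  have EB : PsiE VA VB Vp hsp htp F e he (VB.sObj g) ≫ Phi VA VB Vp hsp htp F a₂ g =
      eqToHom r₁ ≫ F.map ((e, g) : ((a₁, b) : A × B) ⟶ (a₂, b')) ≫ eqToHom r₂ := by
    set φ : ((a₁, b) : A × B) ⟶ (a₂, b) := (e, 𝟙 b) with hφ
    set ψ : ((a₂, b) : A × B) ⟶ (a₂, b') := (𝟙 a₂, g) with hψ
    have hc : φ ≫ ψ = ((e, g) : ((a₁, b) : A × B) ⟶ (a₂, b')) := by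
      apply CategoryTheory.Prod.hom_ext <;> simp [hφ, hψ]
    have hA := F.map_comp₂ φ ψ
    have eφ : Vp.sObj φ = ((a₁, b) : A × B) := by
      rw [hsp, hφ, VA.sObj_of_E e he, VB.sObj_id]
    have eψ : Vp.sObj ψ = ((a₂, VB.sObj g) : A × B) := by rw [hsp, hψ, VA.sObj_id]
    have tφ : Vp.tObj φ = ((a₂, b) : A × B) := by
      rw [htp, hφ, VA.tObj_of_E e he, VB.tObj_id]
    have tψ : Vp.tObj ψ = ((a₂, VB.tObj g) : A × B) := by rw [htp, hψ, VA.tObj_id]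
    have hmidB : HEq (Vp.se φ ≫ Vp.sm ψ)
        ((e, VB.sm g) : ((a₁, b) : A × B) ⟶ (a₂, VB.sObj g)) := by
      refine (mid_s VA VB Vp hE hM φ ψ).trans
        (prodHom_heq (VA.sObj_of_E e he) (VA.sObj_id a₂) (VB.sObj_id b) rfl ?_ ?_)
      · exact (comp_heq (VA.sObj_of_E e he) rfl (VA.sObj_id a₂)
          (heq_se_of_E VA e he) (heq_sm_of_E VA _ (VA.E_id a₂))).trans
          (heq_of_eq (Category.comp_id e))
      · exact (comp_heq (VB.sObj_id b) rfl rfl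
          (heq_se_of_E VB _ (VB.E_id b)) HEq.rfl).trans
          (heq_of_eq (Category.id_comp _))
    have emid : Vp.sObj (Vp.se φ ≫ Vp.sm ψ) = ((a₁, VB.sObj g) : A × B) :=
      (sObj_congr Vp eφ eψ hmidB).trans
        (by rw [hsp, VA.sObj_of_E e he, VB.sObj_of_M _ (VB.sm_mem g)])
    have hp1 : HEq (Vp.se (Vp.se φ ≫ Vp.sm ψ))
        ((e, 𝟙 (VB.sObj g)) : ((a₁, VB.sObj g) : A × B) ⟶ (a₂, VB.sObj g)) := by
      refine ((se_congr Vp eφ eψ hmidB).trans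
        ((sigma_split (prod_s VA VB Vp hE hM
          ((e, VB.sm g) : ((a₁, b) : A × B) ⟶ (a₂, VB.sObj g)))).2.2)).trans ?_
      exact prodHom_heq (VA.sObj_of_E e he) rfl (VB.sObj_of_M _ (VB.sm_mem g)) rfl
        (heq_se_of_E VA e he) (heq_se_of_M VB _ (VB.sm_mem g))
    rw [map_congr Vp F emid eψ hp1] at hA
    have hmidtB : HEq (Vp.tm φ ≫ Vp.te ψ)
        ((𝟙 a₂, VB.te g) : ((a₂, b) : A × B) ⟶ (a₂, VB.tObj g)) := by
      refine (mid_t VA VB Vp hE hM φ ψ).trans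
        (prodHom_heq (VA.tObj_of_E e he) (VA.tObj_id a₂) (VB.tObj_id b) rfl ?_ ?_)
      · exact (comp_heq (VA.tObj_of_E e he) rfl (VA.tObj_id a₂)
          (heq_tm_of_E VA e he) (heq_te_of_E VA _ (VA.E_id a₂))).trans
          (heq_of_eq (Category.id_comp (𝟙 a₂)))
      · exact (comp_heq (VB.tObj_id b) rfl rfl
          (heq_tm_of_E VB _ (VB.E_id b)) HEq.rfl).trans
          (heq_of_eq (Category.id_comp _))
    have etmid : Vp.tObj (Vp.tm φ ≫ Vp.te ψ) = ((a₂, VB.tObj g) : A × B) :=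
      (tObj_congr Vp tφ tψ hmidtB).trans
        (by rw [htp, VA.tObj_id, VB.tObj_of_E _ (VB.te_mem g)])
    have hp2 : HEq (Vp.tm (Vp.tm φ ≫ Vp.te ψ)) (𝟙 ((a₂, VB.tObj g) : A × B)) := by
      refine ((tm_congr Vp tφ tψ hmidtB).trans
        ((sigma_split (prod_t VA VB Vp hE hM
          ((𝟙 a₂, VB.te g) : ((a₂, b) : A × B) ⟶ (a₂, VB.tObj g)))).2.2)).trans ?_
      refine (prodHom_heq (VA.tObj_id a₂) rfl (VB.tObj_of_E _ (VB.te_mem g)) rfl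
        (heq_tm_of_E VA _ (VA.E_id a₂)) (heq_tm_of_E VB _ (VB.te_mem g))).trans ?_
      exact heq_of_eq (CategoryTheory.prod_id (C := A) (D := B) a₂ (VB.tObj g)).symm
    rw [map_congr Vp F etmid tψ hp2, F.map_id] at hA
    have hA' := map_congr Vp F rfl rfl (heq_of_eq hc.symm)
    rw [hA] at hA'
    rw [hA']
    simp [Phi, PsiE, Category.assoc, eqToHom_trans, eqToHom_refl]
    rfl
  rw [EA, EB]

end Interchange

end ParamAux

namespace ParamAux

section InterchangeM

variable {A : Type u} [Category.{v} A] {B : Type u} [Category.{v} B]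
  {CC : Type u₂} [Category.{v₂} CC]
  (VA : Variance A) (VB : Variance B) (Vp : Variance (A × B))
  (hE : ∀ {p q : A × B} (φ : p ⟶ q), Vp.E φ ↔ VA.E φ.1 ∧ VB.E φ.2)
  (hM : ∀ {p q : A × B} (φ : p ⟶ q), Vp.M φ ↔ VA.M φ.1 ∧ VB.M φ.2)
  (hsp : ∀ {p q : A × B} (φ : p ⟶ q), Vp.sObj φ = (VA.sObj φ.1, VB.sObj φ.2))
  (htp : ∀ {p q : A × B} (φ : p ⟶ q), Vp.tObj φ = (VA.tObj φ.1, VB.tObj φ.2))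
  (F : VFunctor Vp CC)

include hE hM in
lemma interchange_M {a₁ a₂ : A} (m : a₁ ⟶ a₂) (hm : VA.M m) {b b' : B} (g : b ⟶ b') :
    PsiM VA VB Vp hsp htp F m hm (VB.sObj g) ≫ Phi VA VB Vp hsp htp F a₁ g =
      Phi VA VB Vp hsp htp F a₂ g ≫ PsiM VA VB Vp hsp htp F m hm (VB.tObj g) := by
  have r₁ : F.obj ((a₂, VB.sObj g) : A × B) =
      F.obj (Vp.sObj ((m, g) : ((a₁, b) : A × B) ⟶ (a₂, b'))) := by
    rw [hsp, VA.sObj_of_M m hm]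
  have r₂ : F.obj (Vp.tObj ((m, g) : ((a₁, b) : A × B) ⟶ (a₂, b'))) =
      F.obj ((a₁, VB.tObj g) : A × B) := by
    rw [htp, VA.tObj_of_M m hm]
  -- ========== side A : map_comp₁ on (𝟙a₁,g) ≫ (m,𝟙b') ==========
  have EA : PsiM VA VB Vp hsp htp F m hm (VB.sObj g) ≫ Phi VA VB Vp hsp htp F a₁ g =
      eqToHom r₁ ≫ F.map ((m, g) : ((a₁, b) : A × B) ⟶ (a₂, b')) ≫ eqToHom r₂ := by
    set φ : ((a₁, b) : A × B) ⟶ (a₁, b') := (𝟙 a₁, g) with hφ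
    set ψ : ((a₁, b') : A × B) ⟶ (a₂, b') := (m, 𝟙 b') with hψ
    have hc : φ ≫ ψ = ((m, g) : ((a₁, b) : A × B) ⟶ (a₂, b')) := by
      apply CategoryTheory.Prod.hom_ext <;> simp [hφ, hψ]
    have hA := F.map_comp₁ φ ψ
    have eφ : Vp.sObj φ = ((a₁, VB.sObj g) : A × B) := by rw [hsp, hφ, VA.sObj_id]
    have eψ : Vp.sObj ψ = ((a₂, b') : A × B) := by
      rw [hsp, hψ, VA.sObj_of_M m hm, VB.sObj_id]
    have tφ : Vp.tObj φ = ((a₁, VB.tObj g) : A × B) := by rw [htp, hφ, VA.tObj_id]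
    have tψ : Vp.tObj ψ = ((a₁, b') : A × B) := by
      rw [htp, hψ, VA.tObj_of_M m hm, VB.tObj_id]
    have hmidA : HEq (Vp.se φ ≫ Vp.sm ψ)
        ((m, VB.se g) : ((a₁, VB.sObj g) : A × B) ⟶ (a₂, b')) := by
      refine (mid_s VA VB Vp hE hM φ ψ).trans
        (prodHom_heq (VA.sObj_id a₁) (VA.sObj_of_M m hm) rfl (VB.sObj_id b') ?_ ?_)
      · exact (comp_heq (VA.sObj_id a₁) rfl (VA.sObj_of_M m hm)
          (heq_se_of_E VA _ (VA.E_id a₁)) (heq_sm_of_M VA m hm)).trans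
          (heq_of_eq (Category.id_comp m))
      · exact (comp_heq rfl rfl (VB.sObj_id b') HEq.rfl
          (heq_sm_of_E VB _ (VB.E_id b'))).trans (heq_of_eq (Category.comp_id _))
    have emid : Vp.sObj (Vp.se φ ≫ Vp.sm ψ) = ((a₂, VB.sObj g) : A × B) :=
      (sObj_congr Vp eφ eψ hmidA).trans
        (by rw [hsp, VA.sObj_of_M m hm, VB.sObj_of_E _ (VB.se_mem g)])
    have hp1 : HEq (Vp.sm (Vp.se φ ≫ Vp.sm ψ))
        ((m, 𝟙 (VB.sObj g)) : ((a₁, VB.sObj g) : A × B) ⟶ (a₂, VB.sObj g)) := by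
      refine ((sm_congr Vp eφ eψ hmidA).trans
        ((sigma_split (prod_s VA VB Vp hE hM
          ((m, VB.se g) : ((a₁, VB.sObj g) : A × B) ⟶ (a₂, b')))).2.1)).trans ?_
      exact prodHom_heq rfl (VA.sObj_of_M m hm) rfl (VB.sObj_of_E _ (VB.se_mem g))
        (heq_sm_of_M VA m hm) (heq_sm_of_E VB _ (VB.se_mem g))
    rw [map_congr Vp F eφ emid hp1] at hA
    have hmidtA : HEq (Vp.tm φ ≫ Vp.te ψ)
        ((𝟙 a₁, VB.tm g) : ((a₁, VB.tObj g) : A × B) ⟶ (a₁, b')) := by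
      refine (mid_t VA VB Vp hE hM φ ψ).trans
        (prodHom_heq (VA.tObj_id a₁) (VA.tObj_of_M m hm) rfl (VB.tObj_id b') ?_ ?_)
      · exact (comp_heq (VA.tObj_id a₁) rfl (VA.tObj_of_M m hm)
          (heq_tm_of_E VA _ (VA.E_id a₁)) (heq_te_of_M VA m hm)).trans
          (heq_of_eq (Category.id_comp (𝟙 a₁)))
      · exact (comp_heq rfl rfl (VB.tObj_id b') HEq.rfl
          (heq_te_of_E VB _ (VB.E_id b'))).trans (heq_of_eq (Category.comp_id _))
    have etmid : Vp.tObj (Vp.tm φ ≫ Vp.te ψ) = ((a₁, VB.tObj g) : A × B) :=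
      (tObj_congr Vp tφ tψ hmidtA).trans
        (by rw [htp, VA.tObj_id, VB.tObj_of_M _ (VB.tm_mem g)])
    have hp2 : HEq (Vp.te (Vp.tm φ ≫ Vp.te ψ)) (𝟙 ((a₁, VB.tObj g) : A × B)) := by
      refine ((te_congr Vp tφ tψ hmidtA).trans
        ((sigma_split (prod_t VA VB Vp hE hM
          ((𝟙 a₁, VB.tm g) : ((a₁, VB.tObj g) : A × B) ⟶ (a₁, b')))).2.1)).trans ?_
      refine (prodHom_heq rfl (VA.tObj_id a₁) rfl (VB.tObj_of_M _ (VB.tm_mem g))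
        (heq_te_of_E VA _ (VA.E_id a₁)) (heq_te_of_M VB _ (VB.tm_mem g))).trans ?_
      exact heq_of_eq (CategoryTheory.prod_id (C := A) (D := B) a₁ (VB.tObj g)).symm
    rw [map_congr Vp F tφ etmid hp2, F.map_id] at hA
    have hA' := map_congr Vp F rfl rfl (heq_of_eq hc.symm)
    rw [hA] at hA'
    rw [hA']
    simp [Phi, PsiM, Category.assoc, eqToHom_trans, eqToHom_refl]
    rfl
  -- ========== side B : map_comp₂ on (m,𝟙b) ≫ (𝟙a₂,g) ==========
  have EB : Phi VA VB Vp hsp htp F a₂ g ≫ PsiM VA VB Vp hsp htp F m hm (VB.tObj g) =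
      eqToHom r₁ ≫ F.map ((m, g) : ((a₁, b) : A × B) ⟶ (a₂, b')) ≫ eqToHom r₂ := by
    set φ : ((a₁, b) : A × B) ⟶ (a₂, b) := (m, 𝟙 b) with hφ
    set ψ : ((a₂, b) : A × B) ⟶ (a₂, b') := (𝟙 a₂, g) with hψ
    have hc : φ ≫ ψ = ((m, g) : ((a₁, b) : A × B) ⟶ (a₂, b')) := by
      apply CategoryTheory.Prod.hom_ext <;> simp [hφ, hψ]
    have hA := F.map_comp₂ φ ψ
    have eφ : Vp.sObj φ = ((a₂, b) : A × B) := by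
      rw [hsp, hφ, VA.sObj_of_M m hm, VB.sObj_id]
    have eψ : Vp.sObj ψ = ((a₂, VB.sObj g) : A × B) := by rw [hsp, hψ, VA.sObj_id]
    have tφ : Vp.tObj φ = ((a₁, b) : A × B) := by
      rw [htp, hφ, VA.tObj_of_M m hm, VB.tObj_id]
    have tψ : Vp.tObj ψ = ((a₂, VB.tObj g) : A × B) := by rw [htp, hψ, VA.tObj_id]
    have hmidB : HEq (Vp.se φ ≫ Vp.sm ψ)
        ((𝟙 a₂, VB.sm g) : ((a₂, b) : A × B) ⟶ (a₂, VB.sObj g)) := by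
      refine (mid_s VA VB Vp hE hM φ ψ).trans
        (prodHom_heq (VA.sObj_of_M m hm) (VA.sObj_id a₂) (VB.sObj_id b) rfl ?_ ?_)
      · exact (comp_heq (VA.sObj_of_M m hm) rfl (VA.sObj_id a₂)
          (heq_se_of_M VA m hm) (heq_sm_of_E VA _ (VA.E_id a₂))).trans
          (heq_of_eq (Category.id_comp (𝟙 a₂)))
      · exact (comp_heq (VB.sObj_id b) rfl rfl
          (heq_se_of_E VB _ (VB.E_id b)) HEq.rfl).trans
          (heq_of_eq (Category.id_comp _))
    have emid : Vp.sObj (Vp.se φ ≫ Vp.sm ψ) = ((a₂, VB.sObj g) : A × B) :=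
      (sObj_congr Vp eφ eψ hmidB).trans
        (by rw [hsp, VA.sObj_id, VB.sObj_of_M _ (VB.sm_mem g)])
    have hp1 : HEq (Vp.se (Vp.se φ ≫ Vp.sm ψ)) (𝟙 ((a₂, VB.sObj g) : A × B)) := by
      refine ((se_congr Vp eφ eψ hmidB).trans
        ((sigma_split (prod_s VA VB Vp hE hM
          ((𝟙 a₂, VB.sm g) : ((a₂, b) : A × B) ⟶ (a₂, VB.sObj g)))).2.2)).trans ?_
      refine (prodHom_heq (VA.sObj_id a₂) rfl (VB.sObj_of_M _ (VB.sm_mem g)) rfl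
        (heq_se_of_E VA _ (VA.E_id a₂)) (heq_se_of_M VB _ (VB.sm_mem g))).trans ?_
      exact heq_of_eq (CategoryTheory.prod_id (C := A) (D := B) a₂ (VB.sObj g)).symm
    rw [map_congr Vp F emid eψ hp1, F.map_id] at hA
    have hmidtB : HEq (Vp.tm φ ≫ Vp.te ψ)
        ((m, VB.te g) : ((a₁, b) : A × B) ⟶ (a₂, VB.tObj g)) := by
      refine (mid_t VA VB Vp hE hM φ ψ).trans
        (prodHom_heq (VA.tObj_of_M m hm) (VA.tObj_id a₂) (VB.tObj_id b) rfl ?_ ?_)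
      · exact (comp_heq (VA.tObj_of_M m hm) rfl (VA.tObj_id a₂)
          (heq_tm_of_M VA m hm) (heq_te_of_E VA _ (VA.E_id a₂))).trans
          (heq_of_eq (Category.comp_id m))
      · exact (comp_heq (VB.tObj_id b) rfl rfl
          (heq_tm_of_E VB _ (VB.E_id b)) HEq.rfl).trans
          (heq_of_eq (Category.id_comp _))
    have etmid : Vp.tObj (Vp.tm φ ≫ Vp.te ψ) = ((a₁, VB.tObj g) : A × B) :=
      (tObj_congr Vp tφ tψ hmidtB).trans
        (by rw [htp, VA.tObj_of_M m hm, VB.tObj_of_E _ (VB.te_mem g)])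
    have hp2 : HEq (Vp.tm (Vp.tm φ ≫ Vp.te ψ))
        ((m, 𝟙 (VB.tObj g)) : ((a₁, VB.tObj g) : A × B) ⟶ (a₂, VB.tObj g)) := by
      refine ((tm_congr Vp tφ tψ hmidtB).trans
        ((sigma_split (prod_t VA VB Vp hE hM
          ((m, VB.te g) : ((a₁, b) : A × B) ⟶ (a₂, VB.tObj g)))).2.2)).trans ?_
      exact prodHom_heq (VA.tObj_of_M m hm) rfl (VB.tObj_of_E _ (VB.te_mem g)) rfl
        (heq_tm_of_M VA m hm) (heq_tm_of_E VB _ (VB.te_mem g))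
    rw [map_congr Vp F etmid tψ hp2] at hA
    have hA' := map_congr Vp F rfl rfl (heq_of_eq hc.symm)
    rw [hA] at hA'
    rw [hA']
    simp [Phi, PsiM, Category.assoc, eqToHom_trans, eqToHom_refl]
    rfl
  rw [EA, EB]

end InterchangeM

end ParamAux

namespace ParamAux

section PhiFunctor

variable {A : Type u} [Category.{v} A] {B : Type u} [Category.{v} B]
  {CC : Type u₂} [Category.{v₂} CC]
  (VA : Variance A) (VB : Variance B) (Vp : Variance (A × B))
  (hE : ∀ {p q : A × B} (φ : p ⟶ q), Vp.E φ ↔ VA.E φ.1 ∧ VB.E φ.2)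
  (hM : ∀ {p q : A × B} (φ : p ⟶ q), Vp.M φ ↔ VA.M φ.1 ∧ VB.M φ.2)
  (hsp : ∀ {p q : A × B} (φ : p ⟶ q), Vp.sObj φ = (VA.sObj φ.1, VB.sObj φ.2))
  (htp : ∀ {p q : A × B} (φ : p ⟶ q), Vp.tObj φ = (VA.tObj φ.1, VB.tObj φ.2))
  (F : VFunctor Vp CC)

lemma Phi_id (a : A) (b : B) :
    Phi VA VB Vp hsp htp F a (𝟙 b) =
      eqToHom (show F.obj ((a, VB.sObj (𝟙 b)) : A × B) = F.obj (a, VB.tObj (𝟙 b)) by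
        rw [VB.sObj_id, VB.tObj_id]) := by
  have hc : ((𝟙 a, 𝟙 b) : ((a, b) : A × B) ⟶ (a, b)) = 𝟙 ((a, b) : A × B) :=
    (CategoryTheory.prod_id (C := A) (D := B) a b).symm
  have h := map_congr Vp F rfl rfl (heq_of_eq hc)
  rw [F.map_id] at h
  rw [Phi, h]
  simp

include hE hM in
lemma Phi_comp₁ (a : A) {b b' b'' : B} (f : b ⟶ b') (g : b' ⟶ b'') :
    Phi VA VB Vp hsp htp F a (f ≫ g) =
      eqToHom (show F.obj ((a, VB.sObj (f ≫ g)) : A × B) =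
          F.obj (a, VB.sObj (VB.sm (VB.se f ≫ VB.sm g))) by
        rw [(VB.sObj_comp f g).trans (VB.sObj_of_M _ (VB.sm_mem (VB.se f ≫ VB.sm g))).symm]) ≫
      Phi VA VB Vp hsp htp F a (VB.sm (VB.se f ≫ VB.sm g)) ≫
      eqToHom (show F.obj ((a, VB.tObj (VB.sm (VB.se f ≫ VB.sm g))) : A × B) =
          F.obj (a, VB.sObj f) by
        rw [VB.tObj_of_M _ (VB.sm_mem (VB.se f ≫ VB.sm g))]) ≫
      Phi VA VB Vp hsp htp F a f ≫
      eqToHom (show F.obj ((a, VB.tObj f) : A × B) =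
          F.obj (a, VB.sObj (VB.te (VB.tm f ≫ VB.te g))) by
        rw [VB.sObj_of_E _ (VB.te_mem (VB.tm f ≫ VB.te g))]) ≫
      Phi VA VB Vp hsp htp F a (VB.te (VB.tm f ≫ VB.te g)) ≫
      eqToHom (show F.obj ((a, VB.tObj (VB.te (VB.tm f ≫ VB.te g))) : A × B) =
          F.obj (a, VB.tObj (f ≫ g)) by
        rw [(VB.tObj_of_E _ (VB.te_mem (VB.tm f ≫ VB.te g))).trans (VB.tObj_comp f g).symm]) := by
  set φ : ((a, b) : A × B) ⟶ (a, b') := (𝟙 a, f) with hφ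
  set ψ : ((a, b') : A × B) ⟶ (a, b'') := (𝟙 a, g) with hψ
  have hc : φ ≫ ψ = ((𝟙 a, f ≫ g) : ((a, b) : A × B) ⟶ (a, b'')) := by
    apply CategoryTheory.Prod.hom_ext <;> simp [hφ, hψ]
  have hA := F.map_comp₁ φ ψ
  have eφ : Vp.sObj φ = ((a, VB.sObj f) : A × B) := by rw [hsp, hφ, VA.sObj_id]
  have eψ : Vp.sObj ψ = ((a, VB.sObj g) : A × B) := by rw [hsp, hψ, VA.sObj_id]
  have tφ : Vp.tObj φ = ((a, VB.tObj f) : A × B) := by rw [htp, hφ, VA.tObj_id]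
  have tψ : Vp.tObj ψ = ((a, VB.tObj g) : A × B) := by rw [htp, hψ, VA.tObj_id]
  have hmid : HEq (Vp.se φ ≫ Vp.sm ψ)
      ((𝟙 a, VB.se f ≫ VB.sm g) : ((a, VB.sObj f) : A × B) ⟶ (a, VB.sObj g)) := by
    refine (mid_s VA VB Vp hE hM φ ψ).trans
      (prodHom_heq (VA.sObj_id a) (VA.sObj_id a) rfl rfl ?_ HEq.rfl)
    exact (comp_heq (VA.sObj_id a) rfl (VA.sObj_id a)
      (heq_se_of_E VA _ (VA.E_id a)) (heq_sm_of_E VA _ (VA.E_id a))).trans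
      (heq_of_eq (Category.id_comp (𝟙 a)))
  have emid : Vp.sObj (Vp.se φ ≫ Vp.sm ψ) =
      ((a, VB.sObj (VB.se f ≫ VB.sm g)) : A × B) :=
    (sObj_congr Vp eφ eψ hmid).trans (by rw [hsp, VA.sObj_id])
  have hp1 : HEq (Vp.sm (Vp.se φ ≫ Vp.sm ψ))
      ((𝟙 a, VB.sm (VB.se f ≫ VB.sm g)) :
        ((a, VB.sObj f) : A × B) ⟶ (a, VB.sObj (VB.se f ≫ VB.sm g))) := by
    refine ((sm_congr Vp eφ eψ hmid).trans
      ((sigma_split (prod_s VA VB Vp hE hM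
        ((𝟙 a, VB.se f ≫ VB.sm g) : ((a, VB.sObj f) : A × B) ⟶ (a, VB.sObj g)))).2.1)).trans ?_
    exact prodHom_heq rfl (VA.sObj_id a) rfl rfl
      (heq_sm_of_E VA _ (VA.E_id a)) HEq.rfl
  rw [map_congr Vp F eφ emid hp1] at hA
  have hmidt : HEq (Vp.tm φ ≫ Vp.te ψ)
      ((𝟙 a, VB.tm f ≫ VB.te g) : ((a, VB.tObj f) : A × B) ⟶ (a, VB.tObj g)) := by
    refine (mid_t VA VB Vp hE hM φ ψ).trans
      (prodHom_heq (VA.tObj_id a) (VA.tObj_id a) rfl rfl ?_ HEq.rfl)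
    exact (comp_heq (VA.tObj_id a) rfl (VA.tObj_id a)
      (heq_tm_of_E VA _ (VA.E_id a)) (heq_te_of_E VA _ (VA.E_id a))).trans
      (heq_of_eq (Category.id_comp (𝟙 a)))
  have etmid : Vp.tObj (Vp.tm φ ≫ Vp.te ψ) =
      ((a, VB.tObj (VB.tm f ≫ VB.te g)) : A × B) :=
    (tObj_congr Vp tφ tψ hmidt).trans (by rw [htp, VA.tObj_id])
  have hp2 : HEq (Vp.te (Vp.tm φ ≫ Vp.te ψ))
      ((𝟙 a, VB.te (VB.tm f ≫ VB.te g)) :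
        ((a, VB.tObj f) : A × B) ⟶ (a, VB.tObj (VB.tm f ≫ VB.te g))) := by
    refine ((te_congr Vp tφ tψ hmidt).trans
      ((sigma_split (prod_t VA VB Vp hE hM
        ((𝟙 a, VB.tm f ≫ VB.te g) : ((a, VB.tObj f) : A × B) ⟶ (a, VB.tObj g)))).2.1)).trans ?_
    exact prodHom_heq rfl (VA.tObj_id a) rfl rfl
      (heq_te_of_E VA _ (VA.E_id a)) HEq.rfl
  rw [map_congr Vp F tφ etmid hp2] at hA
  have hA' := map_congr Vp F rfl rfl (heq_of_eq hc.symm)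
  rw [hA] at hA'
  rw [show Phi VA VB Vp hsp htp F a (f ≫ g) =
    eqToHom (congrArg F.obj (show ((a, VB.sObj (f ≫ g)) : A × B) =
      Vp.sObj ((𝟙 a, f ≫ g) : ((a, b) : A × B) ⟶ (a, b'')) by rw [hsp, VA.sObj_id])) ≫
    F.map ((𝟙 a, f ≫ g) : ((a, b) : A × B) ⟶ (a, b'')) ≫
    eqToHom (congrArg F.obj (show Vp.tObj ((𝟙 a, f ≫ g) : ((a, b) : A × B) ⟶ (a, b'')) =
      ((a, VB.tObj (f ≫ g)) : A × B) by rw [htp, VA.tObj_id])) from rfl]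
  rw [hA']
  simp [Phi, Category.assoc, eqToHom_trans, eqToHom_refl]
  rfl

include hE hM in
lemma Phi_comp₂ (a : A) {b b' b'' : B} (f : b ⟶ b') (g : b' ⟶ b'') :
    Phi VA VB Vp hsp htp F a (f ≫ g) =
      eqToHom (show F.obj ((a, VB.sObj (f ≫ g)) : A × B) =
          F.obj (a, VB.sObj (VB.se (VB.se f ≫ VB.sm g))) by
        rw [(VB.sObj_comp f g).trans (VB.sObj_of_E _ (VB.se_mem (VB.se f ≫ VB.sm g))).symm]) ≫
      Phi VA VB Vp hsp htp F a (VB.se (VB.se f ≫ VB.sm g)) ≫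
      eqToHom (show F.obj ((a, VB.tObj (VB.se (VB.se f ≫ VB.sm g))) : A × B) =
          F.obj (a, VB.sObj g) by
        rw [VB.tObj_of_E _ (VB.se_mem (VB.se f ≫ VB.sm g))]) ≫
      Phi VA VB Vp hsp htp F a g ≫
      eqToHom (show F.obj ((a, VB.tObj g) : A × B) =
          F.obj (a, VB.sObj (VB.tm (VB.tm f ≫ VB.te g))) by
        rw [VB.sObj_of_M _ (VB.tm_mem (VB.tm f ≫ VB.te g))]) ≫
      Phi VA VB Vp hsp htp F a (VB.tm (VB.tm f ≫ VB.te g)) ≫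
      eqToHom (show F.obj ((a, VB.tObj (VB.tm (VB.tm f ≫ VB.te g))) : A × B) =
          F.obj (a, VB.tObj (f ≫ g)) by
        rw [(VB.tObj_of_M _ (VB.tm_mem (VB.tm f ≫ VB.te g))).trans (VB.tObj_comp f g).symm]) := by
  set φ : ((a, b) : A × B) ⟶ (a, b') := (𝟙 a, f) with hφ
  set ψ : ((a, b') : A × B) ⟶ (a, b'') := (𝟙 a, g) with hψ
  have hc : φ ≫ ψ = ((𝟙 a, f ≫ g) : ((a, b) : A × B) ⟶ (a, b'')) := by
    apply CategoryTheory.Prod.hom_ext <;> simp [hφ, hψ]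
  have hA := F.map_comp₂ φ ψ
  have eφ : Vp.sObj φ = ((a, VB.sObj f) : A × B) := by rw [hsp, hφ, VA.sObj_id]
  have eψ : Vp.sObj ψ = ((a, VB.sObj g) : A × B) := by rw [hsp, hψ, VA.sObj_id]
  have tφ : Vp.tObj φ = ((a, VB.tObj f) : A × B) := by rw [htp, hφ, VA.tObj_id]
  have tψ : Vp.tObj ψ = ((a, VB.tObj g) : A × B) := by rw [htp, hψ, VA.tObj_id]
  have hmid : HEq (Vp.se φ ≫ Vp.sm ψ)
      ((𝟙 a, VB.se f ≫ VB.sm g) : ((a, VB.sObj f) : A × B) ⟶ (a, VB.sObj g)) := by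
    refine (mid_s VA VB Vp hE hM φ ψ).trans
      (prodHom_heq (VA.sObj_id a) (VA.sObj_id a) rfl rfl ?_ HEq.rfl)
    exact (comp_heq (VA.sObj_id a) rfl (VA.sObj_id a)
      (heq_se_of_E VA _ (VA.E_id a)) (heq_sm_of_E VA _ (VA.E_id a))).trans
      (heq_of_eq (Category.id_comp (𝟙 a)))
  have emid : Vp.sObj (Vp.se φ ≫ Vp.sm ψ) =
      ((a, VB.sObj (VB.se f ≫ VB.sm g)) : A × B) :=
    (sObj_congr Vp eφ eψ hmid).trans (by rw [hsp, VA.sObj_id])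
  have hp1 : HEq (Vp.se (Vp.se φ ≫ Vp.sm ψ))
      ((𝟙 a, VB.se (VB.se f ≫ VB.sm g)) :
        ((a, VB.sObj (VB.se f ≫ VB.sm g)) : A × B) ⟶ (a, VB.sObj g)) := by
    refine ((se_congr Vp eφ eψ hmid).trans
      ((sigma_split (prod_s VA VB Vp hE hM
        ((𝟙 a, VB.se f ≫ VB.sm g) : ((a, VB.sObj f) : A × B) ⟶ (a, VB.sObj g)))).2.2)).trans ?_
    exact prodHom_heq (VA.sObj_id a) rfl rfl rfl
      (heq_se_of_E VA _ (VA.E_id a)) HEq.rfl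
  rw [map_congr Vp F emid eψ hp1] at hA
  have hmidt : HEq (Vp.tm φ ≫ Vp.te ψ)
      ((𝟙 a, VB.tm f ≫ VB.te g) : ((a, VB.tObj f) : A × B) ⟶ (a, VB.tObj g)) := by
    refine (mid_t VA VB Vp hE hM φ ψ).trans
      (prodHom_heq (VA.tObj_id a) (VA.tObj_id a) rfl rfl ?_ HEq.rfl)
    exact (comp_heq (VA.tObj_id a) rfl (VA.tObj_id a)
      (heq_tm_of_E VA _ (VA.E_id a)) (heq_te_of_E VA _ (VA.E_id a))).trans
      (heq_of_eq (Category.id_comp (𝟙 a)))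
  have etmid : Vp.tObj (Vp.tm φ ≫ Vp.te ψ) =
      ((a, VB.tObj (VB.tm f ≫ VB.te g)) : A × B) :=
    (tObj_congr Vp tφ tψ hmidt).trans (by rw [htp, VA.tObj_id])
  have hp2 : HEq (Vp.tm (Vp.tm φ ≫ Vp.te ψ))
      ((𝟙 a, VB.tm (VB.tm f ≫ VB.te g)) :
        ((a, VB.tObj (VB.tm f ≫ VB.te g)) : A × B) ⟶ (a, VB.tObj g)) := by
    refine ((tm_congr Vp tφ tψ hmidt).trans
      ((sigma_split (prod_t VA VB Vp hE hM
        ((𝟙 a, VB.tm f ≫ VB.te g) : ((a, VB.tObj f) : A × B) ⟶ (a, VB.tObj g)))).2.2)).trans ?_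
    exact prodHom_heq (VA.tObj_id a) rfl rfl rfl
      (heq_tm_of_E VA _ (VA.E_id a)) HEq.rfl
  rw [map_congr Vp F etmid tψ hp2] at hA
  have hA' := map_congr Vp F rfl rfl (heq_of_eq hc.symm)
  rw [hA] at hA'
  rw [show Phi VA VB Vp hsp htp F a (f ≫ g) =
    eqToHom (congrArg F.obj (show ((a, VB.sObj (f ≫ g)) : A × B) =
      Vp.sObj ((𝟙 a, f ≫ g) : ((a, b) : A × B) ⟶ (a, b'')) by rw [hsp, VA.sObj_id])) ≫
    F.map ((𝟙 a, f ≫ g) : ((a, b) : A × B) ⟶ (a, b'')) ≫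
    eqToHom (congrArg F.obj (show Vp.tObj ((𝟙 a, f ≫ g) : ((a, b) : A × B) ⟶ (a, b'')) =
      ((a, VB.tObj (f ≫ g)) : A × B) by rw [htp, VA.tObj_id])) from rfl]
  rw [hA']
  simp [Phi, Category.assoc, eqToHom_trans, eqToHom_refl]
  rfl

end PhiFunctor

end ParamAux

namespace ParamAux

section WedgeLayer

variable {A : Type u} [Category.{v} A] {B : Type u} [Category.{v} B]
  {CC : Type u₂} [Category.{v₂} CC]
  (VA : Variance A) (VB : Variance B) (Vp : Variance (A × B))
  (hE : ∀ {p q : A × B} (φ : p ⟶ q), Vp.E φ ↔ VA.E φ.1 ∧ VB.E φ.2)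
  (hM : ∀ {p q : A × B} (φ : p ⟶ q), Vp.M φ ↔ VA.M φ.1 ∧ VB.M φ.2)
  (hsp : ∀ {p q : A × B} (φ : p ⟶ q), Vp.sObj φ = (VA.sObj φ.1, VB.sObj φ.2))
  (htp : ∀ {p q : A × B} (φ : p ⟶ q), Vp.tObj φ = (VA.tObj φ.1, VB.tObj φ.2))
  (F : VFunctor Vp CC)
  {R₁ : Type u₃} [Category.{v₃} R₁] (L₁ : R₁ ⥤ A)
  (Fb : B → VFunctor VA CC)
  (hFobj : ∀ (a : A) (b : B), (Fb b).obj a = F.obj (a, b))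
  (hFmap : ∀ {a a' : A} (f : a ⟶ a') (b : B),
    (Fb b).map f =
      eqToHom (by rw [hFobj, hsp ((f, 𝟙 b) : ((a, b) : A × B) ⟶ (a', b)), VB.sObj_id]) ≫
        F.map ((f, 𝟙 b) : ((a, b) : A × B) ⟶ (a', b)) ≫
        eqToHom (by rw [hFobj, htp ((f, 𝟙 b) : ((a, b) : A × B) ⟶ (a', b)), VB.tObj_id]))

include hFmap in
lemma nat'' {b : B} (Wd : Wedge VA (Fb b) L₁) {x y : R₁} (f : x ⟶ y) :
    (Wd.η x ≫ eqToHom (hFobj (L₁.obj x) b)) ≫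
        PsiE VA VB Vp hsp htp F (VA.te (L₁.map f)) (VA.te_mem _) b =
      (Wd.η y ≫ eqToHom (hFobj (L₁.obj y) b)) ≫
        PsiM VA VB Vp hsp htp F (VA.tm (L₁.map f)) (VA.tm_mem _) b := by
  have h := Wd.nat f
  rw [hFmap (VA.te (L₁.map f)) b, hFmap (VA.tm (L₁.map f)) b] at h
  have h2 := congrArg (fun t => t ≫ eqToHom (hFobj (VA.tObj (L₁.map f)) b)) h
  simp only [PsiE, PsiM, Category.assoc, eqToHom_trans, eqToHom_trans_assoc,
    eqToHom_refl, Category.comp_id, Category.id_comp] at h2 ⊢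
  exact h2

/-- build a wedge on `Fb b` from data phrased in terms of `F`. -/
def toWedge (b : B) (pt : CC) (η : ∀ x : R₁, pt ⟶ F.obj (L₁.obj x, b))
    (nt : ∀ {x y : R₁} (f : x ⟶ y),
      η x ≫ PsiE VA VB Vp hsp htp F (VA.te (L₁.map f)) (VA.te_mem _) b =
        η y ≫ PsiM VA VB Vp hsp htp F (VA.tm (L₁.map f)) (VA.tm_mem _) b) :
    Wedge VA (Fb b) L₁ where
  pt := pt
  η x := η x ≫ eqToHom (hFobj (L₁.obj x) b).symm
  nat {x y} f := by
    have h := nt f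
    rw [hFmap (VA.te (L₁.map f)) b, hFmap (VA.tm (L₁.map f)) b]
    have h2 := congrArg
      (fun t => t ≫ eqToHom (hFobj (VA.tObj (L₁.map f)) b).symm) h
    simp only [PsiE, PsiM, Category.assoc, eqToHom_trans, eqToHom_trans_assoc,
      eqToHom_refl, Category.comp_id, Category.id_comp] at h2 ⊢
    exact h2

variable (W : ∀ b : B, Wedge VA (Fb b) L₁)

include hE hM hFmap in
lemma Wg_nat {b b' : B} (g : b ⟶ b') {x y : R₁} (f : x ⟶ y) :
    (((W (VB.sObj g)).η x ≫ eqToHom (hFobj (L₁.obj x) (VB.sObj g))) ≫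
        Phi VA VB Vp hsp htp F (L₁.obj x) g) ≫
      PsiE VA VB Vp hsp htp F (VA.te (L₁.map f)) (VA.te_mem _) (VB.tObj g) =
    (((W (VB.sObj g)).η y ≫ eqToHom (hFobj (L₁.obj y) (VB.sObj g))) ≫
        Phi VA VB Vp hsp htp F (L₁.obj y) g) ≫
      PsiM VA VB Vp hsp htp F (VA.tm (L₁.map f)) (VA.tm_mem _) (VB.tObj g) := by
  have h1 := interchange_E VA VB Vp hE hM hsp htp F (VA.te (L₁.map f)) (VA.te_mem _) g
  have h2 := interchange_M VA VB Vp hE hM hsp htp F (VA.tm (L₁.map f)) (VA.tm_mem _) g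
  have h3 := nat'' VA VB Vp hsp htp F L₁ Fb hFobj hFmap (W (VB.sObj g)) f
  simp only [Category.assoc]
  rw [← h1, ← h2]
  simpa [Category.assoc] using
    congrArg (fun t => t ≫ Phi VA VB Vp hsp htp F (VA.tObj (L₁.map f)) g) h3

/-- the wedge over `Fb (g_t)` obtained from the universal wedge at `g_s` composed with
`F(𝟙, g)`. -/
def Wg {b b' : B} (g : b ⟶ b') : Wedge VA (Fb (VB.tObj g)) L₁ :=
  toWedge VA VB Vp hsp htp F L₁ Fb hFobj hFmap (VB.tObj g) (W (VB.sObj g)).pt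
    (fun x => ((W (VB.sObj g)).η x ≫ eqToHom (hFobj (L₁.obj x) (VB.sObj g))) ≫
      Phi VA VB Vp hsp htp F (L₁.obj x) g)
    (fun f => Wg_nat VA VB Vp hE hM hsp htp F L₁ Fb hFobj hFmap W g f)

lemma W_eta {b₁ b₂ : B} (h : b₁ = b₂) (x : R₁) :
    eqToHom (show (W b₁).pt = (W b₂).pt by rw [h]) ≫ (W b₂).η x =
      (W b₁).η x ≫
        eqToHom (show (Fb b₁).obj (L₁.obj x) = (Fb b₂).obj (L₁.obj x) by rw [h]) := by
  subst h; simp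

lemma W_eta_assoc {b₁ b₂ : B} (h : b₁ = b₂) (x : R₁) {Z : CC}
    (k : (Fb b₂).obj (L₁.obj x) ⟶ Z) :
    eqToHom (show (W b₁).pt = (W b₂).pt by rw [h]) ≫ (W b₂).η x ≫ k =
      (W b₁).η x ≫
        eqToHom (show (Fb b₁).obj (L₁.obj x) = (Fb b₂).obj (L₁.obj x) by rw [h]) ≫ k := by
  subst h; simp

variable (hW : ∀ b : B, Nonempty (IsTerminal (W b)))

/-- the underlying morphism of the functor `∫ F` on a morphism `g`. -/
noncomputable def Gmap {b b' : B} (g : b ⟶ b') : (W (VB.sObj g)).pt ⟶ (W (VB.tObj g)).pt :=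
  ((hW (VB.tObj g)).some.from (Wg VA VB Vp hE hM hsp htp F L₁ Fb hFobj hFmap W g)).1

lemma Gmap_prop {b b' : B} (g : b ⟶ b') (x : R₁) :
    Gmap VA VB Vp hE hM hsp htp F L₁ Fb hFobj hFmap W hW g ≫ (W (VB.tObj g)).η x =
      (W (VB.sObj g)).η x ≫ eqToHom (hFobj (L₁.obj x) (VB.sObj g)) ≫
        Phi VA VB Vp hsp htp F (L₁.obj x) g ≫
        eqToHom (hFobj (L₁.obj x) (VB.tObj g)).symm := by
  have h := ((hW (VB.tObj g)).some.from
    (Wg VA VB Vp hE hM hsp htp F L₁ Fb hFobj hFmap W g)).2 x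
  simpa [Gmap, Wg, toWedge, Category.assoc] using h

lemma Gmap_prop_assoc {b b' : B} (g : b ⟶ b') (x : R₁) {Z : CC}
    (k : (Fb (VB.tObj g)).obj (L₁.obj x) ⟶ Z) :
    Gmap VA VB Vp hE hM hsp htp F L₁ Fb hFobj hFmap W hW g ≫ (W (VB.tObj g)).η x ≫ k =
      (W (VB.sObj g)).η x ≫ eqToHom (hFobj (L₁.obj x) (VB.sObj g)) ≫
        Phi VA VB Vp hsp htp F (L₁.obj x) g ≫
        eqToHom (hFobj (L₁.obj x) (VB.tObj g)).symm ≫ k := by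
  rw [← Category.assoc, Gmap_prop]
  simp [Category.assoc]

lemma Gmap_uniq {b b' : B} (g : b ⟶ b') (p : (W (VB.sObj g)).pt ⟶ (W (VB.tObj g)).pt)
    (hp : ∀ x : R₁, p ≫ (W (VB.tObj g)).η x =
      (W (VB.sObj g)).η x ≫ eqToHom (hFobj (L₁.obj x) (VB.sObj g)) ≫
        Phi VA VB Vp hsp htp F (L₁.obj x) g ≫
        eqToHom (hFobj (L₁.obj x) (VB.tObj g)).symm) :
    p = Gmap VA VB Vp hE hM hsp htp F L₁ Fb hFobj hFmap W hW g := by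
  refine congrArg Subtype.val ((hW (VB.tObj g)).some.hom_ext
    (⟨p, fun x => ?_⟩ : (Wg VA VB Vp hE hM hsp htp F L₁ Fb hFobj hFmap W g) ⟶ _)
    ((hW (VB.tObj g)).some.from _))
  refine (hp x).trans ?_
  simp [Wg, toWedge, Category.assoc]

end WedgeLayer

end ParamAux

namespace ParamAux

lemma vext {C : Type u} [Category.{v} C] {D : Type u₂} [Category.{v₂} D] {V : Variance C}
    {G G' : VFunctor V D} (hobj : G.obj = G'.obj)
    (hmap : ∀ {X Y : C} (f : X ⟶ Y), HEq (G.map f) (G'.map f)) : G = G' := by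
  obtain ⟨o, m, mi, mc1, mc2⟩ := G
  obtain ⟨o', m', mi', mc1', mc2'⟩ := G'
  dsimp only at hobj
  subst hobj
  have hm : @m = @m' := by
    funext X Y f
    exact eq_of_heq (hmap f)
  subst hm
  rfl

section GFun

variable {A : Type u} [Category.{v} A] {B : Type u} [Category.{v} B]
  {CC : Type u₂} [Category.{v₂} CC]
  (VA : Variance A) (VB : Variance B) (Vp : Variance (A × B))
  (hE : ∀ {p q : A × B} (φ : p ⟶ q), Vp.E φ ↔ VA.E φ.1 ∧ VB.E φ.2)
  (hM : ∀ {p q : A × B} (φ : p ⟶ q), Vp.M φ ↔ VA.M φ.1 ∧ VB.M φ.2)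
  (hsp : ∀ {p q : A × B} (φ : p ⟶ q), Vp.sObj φ = (VA.sObj φ.1, VB.sObj φ.2))
  (htp : ∀ {p q : A × B} (φ : p ⟶ q), Vp.tObj φ = (VA.tObj φ.1, VB.tObj φ.2))
  (F : VFunctor Vp CC)
  {R₁ : Type u₃} [Category.{v₃} R₁] (L₁ : R₁ ⥤ A)
  (Fb : B → VFunctor VA CC)
  (hFobj : ∀ (a : A) (b : B), (Fb b).obj a = F.obj (a, b))
  (hFmap : ∀ {a a' : A} (f : a ⟶ a') (b : B),
    (Fb b).map f =
      eqToHom (by rw [hFobj, hsp ((f, 𝟙 b) : ((a, b) : A × B) ⟶ (a', b)), VB.sObj_id]) ≫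
        F.map ((f, 𝟙 b) : ((a, b) : A × B) ⟶ (a', b)) ≫
        eqToHom (by rw [hFobj, htp ((f, 𝟙 b) : ((a, b) : A × B) ⟶ (a', b)), VB.tObj_id]))
  (W : ∀ b : B, Wedge VA (Fb b) L₁)
  (hW : ∀ b : B, Nonempty (IsTerminal (W b)))

/-- the end, as a functor of variance on `B`. -/
noncomputable def Gfun : VFunctor VB CC where
  obj b := (W b).pt
  map {b b'} g := Gmap VA VB Vp hE hM hsp htp F L₁ Fb hFobj hFmap W hW g
  map_id X := by
    refine (Gmap_uniq VA VB Vp hE hM hsp htp F L₁ Fb hFobj hFmap W hW (𝟙 X) _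
      fun x => ?_).symm
    rw [Phi_id VA VB Vp hsp htp F (L₁.obj x) X]
    simp only [Category.assoc, eqToHom_trans, eqToHom_trans_assoc]
    exact W_eta VA L₁ Fb W ((VB.sObj_id X).trans (VB.tObj_id X).symm) x
  map_comp₁ {b b' b''} f g := by
    refine (Gmap_uniq VA VB Vp hE hM hsp htp F L₁ Fb hFobj hFmap W hW (f ≫ g) _
      fun x => ?_).symm
    simp only [Category.assoc]
    rw [W_eta VA L₁ Fb W
      ((VB.tObj_of_E _ (VB.te_mem (VB.tm f ≫ VB.te g))).trans (VB.tObj_comp f g).symm) x]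
    rw [Gmap_prop_assoc VA VB Vp hE hM hsp htp F L₁ Fb hFobj hFmap W hW
      (VB.te (VB.tm f ≫ VB.te g)) x]
    rw [W_eta_assoc VA L₁ Fb W
      ((VB.sObj_of_E _ (VB.te_mem (VB.tm f ≫ VB.te g))).symm) x]
    rw [Gmap_prop_assoc VA VB Vp hE hM hsp htp F L₁ Fb hFobj hFmap W hW f x]
    rw [W_eta_assoc VA L₁ Fb W (VB.tObj_of_M _ (VB.sm_mem (VB.se f ≫ VB.sm g))) x]
    rw [Gmap_prop_assoc VA VB Vp hE hM hsp htp F L₁ Fb hFobj hFmap W hW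
      (VB.sm (VB.se f ≫ VB.sm g)) x]
    rw [W_eta_assoc VA L₁ Fb W
      ((VB.sObj_comp f g).trans (VB.sObj_of_M _ (VB.sm_mem (VB.se f ≫ VB.sm g))).symm) x]
    rw [Phi_comp₁ VA VB Vp hE hM hsp htp F (L₁.obj x) f g]
    simp only [Category.assoc, eqToHom_trans, eqToHom_trans_assoc, eqToHom_refl,
      Category.comp_id, Category.id_comp]
  map_comp₂ {b b' b''} f g := by
    refine (Gmap_uniq VA VB Vp hE hM hsp htp F L₁ Fb hFobj hFmap W hW (f ≫ g) _
      fun x => ?_).symm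
    simp only [Category.assoc]
    rw [W_eta VA L₁ Fb W
      ((VB.tObj_of_M _ (VB.tm_mem (VB.tm f ≫ VB.te g))).trans (VB.tObj_comp f g).symm) x]
    rw [Gmap_prop_assoc VA VB Vp hE hM hsp htp F L₁ Fb hFobj hFmap W hW
      (VB.tm (VB.tm f ≫ VB.te g)) x]
    rw [W_eta_assoc VA L₁ Fb W
      ((VB.sObj_of_M _ (VB.tm_mem (VB.tm f ≫ VB.te g))).symm) x]
    rw [Gmap_prop_assoc VA VB Vp hE hM hsp htp F L₁ Fb hFobj hFmap W hW g x]
    rw [W_eta_assoc VA L₁ Fb W (VB.tObj_of_E _ (VB.se_mem (VB.se f ≫ VB.sm g))) x]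
    rw [Gmap_prop_assoc VA VB Vp hE hM hsp htp F L₁ Fb hFobj hFmap W hW
      (VB.se (VB.se f ≫ VB.sm g)) x]
    rw [W_eta_assoc VA L₁ Fb W
      ((VB.sObj_comp f g).trans (VB.sObj_of_E _ (VB.se_mem (VB.se f ≫ VB.sm g))).symm) x]
    rw [Phi_comp₂ VA VB Vp hE hM hsp htp F (L₁.obj x) f g]
    simp only [Category.assoc, eqToHom_trans, eqToHom_trans_assoc, eqToHom_refl,
      Category.comp_id, Category.id_comp]

end GFun

end ParamAux

/-- Parameter theorem: if the end `∫_{L₁} F^b` exists (given by a terminal `L₁`-wedge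
`W b` of the partial functor `F^b = F(-, b)`) for every object `b` of `B`, then
`b ↦ ∫_{L₁} F^b` extends uniquely to a functor of variance `∫_{L₁}F : B ⥤ C` such that
`ω^{g_t}_a ∘ (∫_{L₁}F)(g) = F(id_{L₁ a}, g) ∘ ω^{g_s}_a` for every object `a` of `R₁` and
morphism `g` of `B`.  Here `Vp` is the product variance on `A × B` (its factorizations are
computed componentwise, as recorded by `hsp`, `htp`), and `Fb b` is the partial functor
`F^b`, as recorded by `hFobj`, `hFmap`. -/
theorem parameter_theorem {A : Type u} [Category.{v} A] {B : Type u} [Category.{v} B]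
    {CC : Type u₂} [Category.{v₂} CC]
    (VA : Variance A) (VB : Variance B) (Vp : Variance (A × B))
    (hE : ∀ {p q : A × B} (φ : p ⟶ q), Vp.E φ ↔ VA.E φ.1 ∧ VB.E φ.2)
    (hM : ∀ {p q : A × B} (φ : p ⟶ q), Vp.M φ ↔ VA.M φ.1 ∧ VB.M φ.2)
    (hsp : ∀ {p q : A × B} (φ : p ⟶ q), Vp.sObj φ = (VA.sObj φ.1, VB.sObj φ.2))
    (htp : ∀ {p q : A × B} (φ : p ⟶ q), Vp.tObj φ = (VA.tObj φ.1, VB.tObj φ.2))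
    (F : VFunctor Vp CC)
    {R₁ : Type u₃} [Category.{v₃} R₁] (L₁ : R₁ ⥤ A)
    (Fb : B → VFunctor VA CC)
    (hFobj : ∀ (a : A) (b : B), (Fb b).obj a = F.obj (a, b))
    (hFmap : ∀ {a a' : A} (f : a ⟶ a') (b : B),
      (Fb b).map f =
        eqToHom (by rw [hFobj, hsp ((f, 𝟙 b) : (a, b) ⟶ (a', b)), VB.sObj_id]) ≫
          F.map ((f, 𝟙 b) : (a, b) ⟶ (a', b)) ≫
          eqToHom (by rw [hFobj, htp ((f, 𝟙 b) : (a, b) ⟶ (a', b)), VB.tObj_id]))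
    (W : ∀ b : B, Wedge VA (Fb b) L₁)
    (hW : ∀ b : B, Nonempty (IsTerminal (W b))) :
    ∃! G : VFunctor VB CC, ∃ h : ∀ b : B, G.obj b = (W b).pt,
      ∀ (a : R₁) {b b' : B} (g : b ⟶ b'),
        eqToHom (h (VB.sObj g)).symm ≫ G.map g ≫ eqToHom (h (VB.tObj g)) ≫
            (W (VB.tObj g)).η a =
          (W (VB.sObj g)).η a ≫
            eqToHom (by
              rw [hFobj, hsp ((𝟙 (L₁.obj a), g) : (L₁.obj a, b) ⟶ (L₁.obj a, b')),
                VA.sObj_id]) ≫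
            F.map ((𝟙 (L₁.obj a), g) : (L₁.obj a, b) ⟶ (L₁.obj a, b')) ≫
            eqToHom (by
              rw [hFobj, htp ((𝟙 (L₁.obj a), g) : (L₁.obj a, b) ⟶ (L₁.obj a, b')),
                VA.tObj_id]) := by
  refine ⟨ParamAux.Gfun VA VB Vp (fun {p q} φ => hE φ) (fun {p q} φ => hM φ)
    (fun {p q} φ => hsp φ) (fun {p q} φ => htp φ) F L₁ Fb hFobj
    (fun {a a'} f b => hFmap f b) W hW, ⟨fun b => rfl, ?_⟩, ?_⟩
  · intro a b b' g
    simp only [eqToHom_refl, Category.comp_id, Category.id_comp]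
    have h := ParamAux.Gmap_prop VA VB Vp (fun {p q} φ => hE φ) (fun {p q} φ => hM φ)
      (fun {p q} φ => hsp φ) (fun {p q} φ => htp φ) F L₁ Fb hFobj
      (fun {a a'} f b => hFmap f b) W hW g a
    rw [show (ParamAux.Gfun VA VB Vp (fun {p q} φ => hE φ) (fun {p q} φ => hM φ)
      (fun {p q} φ => hsp φ) (fun {p q} φ => htp φ) F L₁ Fb hFobj
      (fun {a a'} f b => hFmap f b) W hW).map g = ParamAux.Gmap VA VB Vp
      (fun {p q} φ => hE φ) (fun {p q} φ => hM φ) (fun {p q} φ => hsp φ)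
      (fun {p q} φ => htp φ) F L₁ Fb hFobj (fun {a a'} f b => hFmap f b) W hW g from rfl]
    erw [eqToHom_refl, eqToHom_refl, Category.id_comp, Category.id_comp, h]
    simp [ParamAux.Phi, Category.assoc, eqToHom_trans, eqToHom_trans_assoc]
  · rintro G' ⟨h', hp'⟩
    refine ParamAux.vext (funext h') fun {X Y} g => ?_
    have key : eqToHom (h' (VB.sObj g)).symm ≫ G'.map g ≫ eqToHom (h' (VB.tObj g)) =
        ParamAux.Gmap VA VB Vp (fun {p q} φ => hE φ) (fun {p q} φ => hM φ)
          (fun {p q} φ => hsp φ) (fun {p q} φ => htp φ) F L₁ Fb hFobj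
          (fun {a a'} f b => hFmap f b) W hW g := by
      refine ParamAux.Gmap_uniq VA VB Vp (fun {p q} φ => hE φ) (fun {p q} φ => hM φ)
        (fun {p q} φ => hsp φ) (fun {p q} φ => htp φ) F L₁ Fb hFobj
        (fun {a a'} f b => hFmap f b) W hW g _ fun x => ?_
      have h2 := hp' x g
      simp only [Category.assoc] at h2 ⊢
      rw [h2]
      simp [ParamAux.Phi, Category.assoc, eqToHom_trans, eqToHom_trans_assoc]
    have heq : G'.map g = eqToHom (h' (VB.sObj g)) ≫
        ParamAux.Gmap VA VB Vp (fun {p q} φ => hE φ) (fun {p q} φ => hM φ)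
          (fun {p q} φ => hsp φ) (fun {p q} φ => htp φ) F L₁ Fb hFobj
          (fun {a a'} f b => hFmap f b) W hW g ≫ eqToHom (h' (VB.tObj g)).symm := by
      rw [← key]
      simp
    exact (conj_eqToHom_iff_heq _ _ (h' (VB.sObj g)) (h' (VB.tObj g))).mp
      (by exact heq)
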